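/- Let N be a complete normal subgroup of an n-space group Γ with V = Span(N), and suppose the space group extension 1 → N → Γ → Γ/N → 1 splits, i.e. there is a subgroup Σ of Γ with Γ = NΣ and N ∩ Σ = {I}. If b+B ∈ Γ is such that the coset N(b+B) has finite order in Γ/N, then, writing b = c+d with c ∈ V and d ∈ V^⊥, there exist v ∈ V and ν ∈ N with ν(v) = c + Bv (that is, the induced element of the structure group fixes the point Nv of V/N). -/

import Mathlib

noncomputable section

abbrev Euc (n : ℕ) : Type := EuclideanSpace ℝ (Fin n)

abbrev AffG (n : ℕ) : Type := Euc n ≃ᵃ[ℝ] Euc n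

/-- The translation `x ↦ a + x` as an affinity of `Eⁿ`. -/
def transl {n : ℕ} (a : Euc n) : AffG n := AffineEquiv.constVAdd ℝ (Euc n) a

/-- `Span(H)` : the linear span of the translation vectors of `H`. -/
def spanOf {n : ℕ} (H : Subgroup (AffG n)) : Submodule ℝ (Euc n) :=
  Submodule.span ℝ {a : Euc n | transl a ∈ H}

/-- An `n`-space group: a group of isometries acting properly discontinuously
and cocompactly on `Eⁿ`. -/
def IsSpaceGroup {n : ℕ} (Γ : Subgroup (AffG n)) : Prop :=
  (∀ f ∈ Γ, Isometry (⇑f)) ∧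
  (∀ K : Set (Euc n), IsCompact K →
    {γ : AffG n | γ ∈ Γ ∧ ((⇑γ '' K) ∩ K).Nonempty}.Finite) ∧
  (∃ K : Set (Euc n), IsCompact K ∧ ∀ x : Euc n, ∃ γ ∈ Γ, γ x ∈ K)

/-- `N` is a complete normal subgroup of `Γ`:  it is normal in `Γ` and
equals `{a+A ∈ Γ : a ∈ V ∧ V^⊥ ⊆ Fix A}` where `V = Span N`
(for `f = a + A` we have `a = f 0` and `A = f.linear`). -/
def IsCompleteNormal {n : ℕ} (N Γ : Subgroup (AffG n)) : Prop :=
  N ≤ Γ ∧ (∀ γ ∈ Γ, ∀ ν ∈ N, γ * ν * γ⁻¹ ∈ N) ∧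
  (∀ f : AffG n, f ∈ N ↔
    f ∈ Γ ∧ f 0 ∈ spanOf N ∧ ∀ x ∈ (spanOf N)ᗮ, f.linear x = x)

/-- Membership in the kernel `K = {b+B ∈ Γ : b ∈ V^⊥ ∧ V ⊆ Fix B}`
of the action of `Γ` on `V`. -/
def InKernel {n : ℕ} (Γ : Subgroup (AffG n)) (V : Submodule ℝ (Euc n)) (f : AffG n) : Prop :=
  f ∈ Γ ∧ f 0 ∈ Vᗮ ∧ ∀ x ∈ V, f.linear x = x

end

namespace Stmt7Aux
variable {n : ℕ}

lemma affApply (f : AffG n) (x : Euc n) : f x = f.linear x + f 0 := by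
  have := f.map_vadd (0 : Euc n) x
  simpa using this

lemma conj_transl (γ : AffG n) (a : Euc n) : γ * transl a * γ⁻¹ = transl (γ.linear a) := by
  refine AffineEquiv.ext fun x => ?_
  show γ (transl a (γ⁻¹ x)) = transl (γ.linear a) x
  have h1 : transl a (γ⁻¹ x) = a + γ⁻¹ x := rfl
  have h2 : transl (γ.linear a) x = γ.linear a + x := rfl
  rw [h1, h2, affApply γ, map_add]
  have : γ.linear (γ⁻¹ x) + γ 0 = γ (γ⁻¹ x) := (affApply γ _).symm
  rw [add_assoc, this]
  have h3 : γ (γ⁻¹ x) = x := by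
    rw [show γ (γ⁻¹ x) = (γ * γ⁻¹) x from rfl, mul_inv_cancel]; rfl
  rw [h3]

lemma span_inv {N Γ : Subgroup (AffG n)} (hnorm : ∀ γ ∈ Γ, ∀ ν ∈ N, γ * ν * γ⁻¹ ∈ N)
    {γ : AffG n} (hγ : γ ∈ Γ) : ∀ x ∈ spanOf N, γ.linear x ∈ spanOf N := by
  intro x hx
  have h : Submodule.map (γ.linear.toLinearMap) (spanOf N) ≤ spanOf N := by
    rw [spanOf, Submodule.map_span, Submodule.span_le]
    rintro _ ⟨a, ha, rfl⟩
    refine Submodule.subset_span ?_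
    show transl (γ.linear a) ∈ N
    rw [← conj_transl]
    exact hnorm γ hγ _ ha
  exact h ⟨x, hx, rfl⟩

lemma linear_inner {f : AffG n} (hf : Isometry ⇑f) (x y : Euc n) :
    @inner ℝ _ _ (f.linear x) (f.linear y) = @inner ℝ _ _ x y := by
  have hn : ∀ z, ‖f.linear z‖ = ‖z‖ := by
    intro z
    have h := hf.dist_eq z 0
    rw [dist_eq_norm, dist_eq_norm] at h
    have h2 : f z - f 0 = f.linear z := by rw [affApply]; abel
    simpa [h2] using h
  exact LinearIsometry.inner_map_map ⟨f.linear.toLinearMap, hn⟩ x y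

lemma linear_perp {f : AffG n} (hf : Isometry ⇑f) {V : Submodule ℝ (Euc n)}
    (hV : ∀ x ∈ V, f.linear x ∈ V) : ∀ u ∈ Vᗮ, f.linear u ∈ Vᗮ := by
  intro u hu
  have hmap : Submodule.map f.linear.toLinearMap V = V := by
    apply Submodule.eq_of_le_of_finrank_le
    · rintro _ ⟨x, hx, rfl⟩; exact hV x hx
    · rw [LinearEquiv.finrank_map_eq]
  rw [Submodule.mem_orthogonal]
  intro v hv
  rw [← hmap] at hv
  obtain ⟨v', hv', rfl⟩ := hv
  exact (linear_inner hf v' u).trans ((Submodule.mem_orthogonal V u).mp hu v' hv')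

lemma mem_sup_decomp {N Sg Γ : Subgroup (AffG n)} (hSΓ : Sg ≤ Γ)
    (hnorm : ∀ γ ∈ Γ, ∀ ν ∈ N, γ * ν * γ⁻¹ ∈ N) {g : AffG n} (hg : g ∈ N ⊔ Sg) :
    ∃ ν ∈ N, ∃ σ ∈ Sg, g = ν * σ := by
  let K : Subgroup (AffG n) :=
    { carrier := {g | ∃ ν ∈ N, ∃ σ ∈ Sg, g = ν * σ}
      one_mem' := ⟨1, N.one_mem, 1, Sg.one_mem, by simp⟩
      mul_mem' := by
        rintro a b ⟨ν₁, hν₁, σ₁, hσ₁, rfl⟩ ⟨ν₂, hν₂, σ₂, hσ₂, rfl⟩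
        exact ⟨ν₁ * (σ₁ * ν₂ * σ₁⁻¹), N.mul_mem hν₁ (hnorm σ₁ (hSΓ hσ₁) ν₂ hν₂),
          σ₁ * σ₂, Sg.mul_mem hσ₁ hσ₂, by group⟩
      inv_mem' := by
        rintro a ⟨ν, hν, σ, hσ, rfl⟩
        refine ⟨σ⁻¹ * ν⁻¹ * σ, ?_, σ⁻¹, Sg.inv_mem hσ, by group⟩
        have := hnorm σ⁻¹ (Γ.inv_mem (hSΓ hσ)) ν⁻¹ (N.inv_mem hν)
        simpa using this }
  have hle : N ⊔ Sg ≤ K := sup_le (fun x hx => ⟨x, hx, 1, Sg.one_mem, by simp⟩)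
    (fun x hx => ⟨1, N.one_mem, x, hx, by simp⟩)
  exact hle hg

lemma pow_decomp {N Γ : Subgroup (AffG n)} (hnorm : ∀ γ ∈ Γ, ∀ ν ∈ N, γ * ν * γ⁻¹ ∈ N)
    {ν₀ σ : AffG n} (hν₀ : ν₀ ∈ N) (hσ : σ ∈ Γ) :
    ∀ k : ℕ, ∃ μ ∈ N, (ν₀ * σ) ^ k = μ * σ ^ k := by
  intro k
  induction k with
  | zero => exact ⟨1, N.one_mem, by simp⟩
  | succ k ih =>
    obtain ⟨μ, hμ, hk⟩ := ih
    refine ⟨μ * (σ ^ k * ν₀ * (σ ^ k)⁻¹), N.mul_mem hμ (hnorm _ (Γ.pow_mem hσ k) _ hν₀), ?_⟩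
    rw [pow_succ, hk]
    group

lemma exists_fixed {σ : AffG n} {m : ℕ} (hm : 0 < m) (h : σ ^ m = 1) : ∃ w, σ w = w := by
  refine ⟨(m : ℝ)⁻¹ • ∑ k ∈ Finset.range m, (σ ^ k) 0, ?_⟩
  set S := ∑ k ∈ Finset.range m, (σ ^ k) 0 with hS
  have hlin : ∀ k, σ.linear ((σ ^ k) 0) = (σ ^ (k + 1)) 0 - σ 0 := by
    intro k
    have : (σ ^ (k + 1)) 0 = σ ((σ ^ k) 0) := by rw [pow_succ']; rfl
    rw [this, affApply σ ((σ ^ k) 0)]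
    abel
  have hT : σ.linear S = S - (m : ℝ) • σ 0 := by
    rw [hS, map_sum]
    have h1 : ∑ k ∈ Finset.range m, σ.linear ((σ ^ k) 0)
        = ∑ k ∈ Finset.range m, ((σ ^ (k + 1)) 0 - σ 0) := by
      exact Finset.sum_congr rfl fun k _ => hlin k
    rw [h1, Finset.sum_sub_distrib, Finset.sum_const, Finset.card_range]
    have h2 : ∑ k ∈ Finset.range m, (σ ^ (k + 1)) 0 = S := by
      have h3 := Finset.sum_range_succ' (fun k => (σ ^ k) 0) m
      have h4 := Finset.sum_range_succ (fun k => (σ ^ k) 0) m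
      have h5 : (σ ^ m) 0 = (0 : Euc n) := by rw [h]; rfl
      have h6 : (σ ^ 0) 0 = (0 : Euc n) := by norm_num
      rw [h4, h5] at h3
      simpa [h6, hS] using h3.symm
    rw [h2]
    simp [Nat.cast_smul_eq_nsmul ℝ]
    exact hS
  have hm' : (m : ℝ) ≠ 0 := Nat.cast_ne_zero.mpr hm.ne'
  rw [affApply σ, map_smul, hT, smul_sub, smul_smul, inv_mul_cancel₀ hm']
  simp

end Stmt7Aux

open Stmt7Aux in
/-- Lemma 4: if the extension `1 → N → Γ → Γ/N → 1` splits and the coset `N(b+B)` has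
finite order in `Γ/N`, then the induced element of the structure group fixes a point of
`V/N`. -/
theorem stmt7 {n : ℕ} (Γ N : Subgroup (AffG n)) (hΓ : IsSpaceGroup Γ)
    (hN : IsCompleteNormal N Γ)
    (hsplit : ∃ Sg : Subgroup (AffG n), Sg ≤ Γ ∧ N ⊔ Sg = Γ ∧ N ⊓ Sg = ⊥)
    (f : AffG n) (hf : f ∈ Γ) (hfin : ∃ m : ℕ, 0 < m ∧ f ^ m ∈ N)
    (c d : Euc n) (hc : c ∈ spanOf N) (hd : d ∈ (spanOf N)ᗮ) (hcd : f 0 = c + d) :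
    ∃ v ∈ spanOf N, ∃ ν ∈ N, ν v = c + f.linear v := by
  obtain ⟨hiso, -, -⟩ := hΓ
  obtain ⟨hNΓ, hnorm, hcomp⟩ := hN

  obtain ⟨Sg, hSΓ, hsup, hinf⟩ := hsplit
  obtain ⟨m, hm, hfm⟩ := hfin
  obtain ⟨ν₀, hν₀, σ, hσ, hfd⟩ := mem_sup_decomp hSΓ hnorm (hsup ▸ hf)
  -- σ has order dividing m
  obtain ⟨μ, hμ, hpow⟩ := pow_decomp hnorm hν₀ (hSΓ hσ) m
  have hσm : σ ^ m = 1 := by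
    have h1 : σ ^ m ∈ N := by
      have : σ ^ m = μ⁻¹ * f ^ m := by rw [hfd, hpow]; group
      rw [this]
      exact N.mul_mem (N.inv_mem hμ) hfm
    have h2 : σ ^ m ∈ N ⊓ Sg := ⟨h1, Sg.pow_mem hσ m⟩
    rw [hinf] at h2
    exact h2
  obtain ⟨w, hw⟩ := exists_fixed hm hσm
  obtain ⟨v, hv, u, hu, hwvu⟩ := (spanOf N).exists_add_mem_mem_orthogonal w
  -- f w = ν₀ w
  have hfw : f w = ν₀ w := by rw [hfd, show (ν₀ * σ) w = ν₀ (σ w) from rfl, hw]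
  obtain ⟨-, ha, hfix⟩ := (hcomp ν₀).mp hν₀
  -- expand both sides
  have hB : ∀ x ∈ spanOf N, f.linear x ∈ spanOf N := span_inv hnorm hf
  have hA : ∀ x ∈ spanOf N, ν₀.linear x ∈ spanOf N := span_inv hnorm (hNΓ hν₀)
  have hBperp : ∀ x ∈ (spanOf N)ᗮ, f.linear x ∈ (spanOf N)ᗮ := linear_perp (hiso f hf) hB
  have key : ν₀ 0 + ν₀.linear v + u = (c + f.linear v) + (d + f.linear u) := by
    have e1 : ν₀ w = ν₀.linear v + u + ν₀ 0 := by
      rw [affApply ν₀ w, hwvu, map_add, hfix u hu]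
    have e2 : f w = f.linear v + f.linear u + (c + d) := by
      rw [affApply f w, hwvu, map_add, hcd]
    have e3 : ν₀.linear v + u + ν₀ 0 = f.linear v + f.linear u + (c + d) := by
      rw [← e1, ← e2, hfw]
    rw [show ν₀ 0 + ν₀.linear v + u = ν₀.linear v + u + ν₀ 0 from by abel, e3]
    abel
  -- uniqueness of orthogonal decomposition
  have hp1 : ν₀ 0 + ν₀.linear v ∈ spanOf N := (spanOf N).add_mem ha (hA v hv)
  have hp2 : c + f.linear v ∈ spanOf N := (spanOf N).add_mem hc (hB v hv)
  have hq2 : d + f.linear u ∈ (spanOf N)ᗮ := ((spanOf N)ᗮ).add_mem hd (hBperp u hu)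
  have hdiff : (ν₀ 0 + ν₀.linear v) - (c + f.linear v) = (d + f.linear u) - u := by
    rw [sub_eq_sub_iff_add_eq_add, key]
    abel
  have hzero : (ν₀ 0 + ν₀.linear v) - (c + f.linear v) = 0 := by
    have hmem1 : (ν₀ 0 + ν₀.linear v) - (c + f.linear v) ∈ spanOf N :=
      (spanOf N).sub_mem hp1 hp2
    have hmem2 : (ν₀ 0 + ν₀.linear v) - (c + f.linear v) ∈ (spanOf N)ᗮ := by
      rw [hdiff]; exact ((spanOf N)ᗮ).sub_mem hq2 hu
    have := Submodule.inner_right_of_mem_orthogonal hmem1 hmem2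
    exact inner_self_eq_zero.mp this
  refine ⟨v, hv, ν₀, hν₀, ?_⟩
  rw [affApply ν₀ v]
  have := sub_eq_zero.mp hzero
  rw [add_comm] at this
  exact this
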